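/- The fixed-point set {x ∈ ℝ³ : Mx = x} of the matrix M equals the line ℝ·(1,0,1) spanned by the vector (1,0,1), and this vector is isotropic for B, i.e. B((1,0,1),(1,0,1)) = 0. (Thus M, viewed as a transformation of the hyperbolic space H = {x ∈ ℝ³ : B(x,x) = 1, x₁ > 0}, is a parabolic element, with a unique fixed point on the boundary circle.) -/
import Mathlib


/-- The intersection form of `N = CP² # (−CP²) # (−CP²)` in the basis `S, E₁, E₂`:
`B x y = x₁y₁ − x₂y₂ − x₃y₃`. -/
def interForm (x y : Fin 3 → ℝ) : ℝ := x 0 * y 0 - x 1 * y 1 - x 2 * y 2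

/-- The matrix of `f_* = (ρ_{Σ₊} ∘ ρ_{Σ₋})_*` on `H₂(N)`. -/
def M : Matrix (Fin 3) (Fin 3) ℝ := !![9, 4, -8; 4, 1, -4; 8, 4, -7]

theorem stmt2 :
    {x : Fin 3 → ℝ | M.mulVec x = x} = {x : Fin 3 → ℝ | ∃ t : ℝ, x = t • ![1, 0, 1]} ∧
    interForm ![1, 0, 1] ![1, 0, 1] = 0 := by
  constructor
  · ext x
    simp only [Set.mem_setOf_eq]
    constructor
    · intro h
      have h0 := congrFun h 0
      have h1 := congrFun h 1
      have h2 := congrFun h 2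
      simp [M, Matrix.mulVec, dotProduct, Fin.sum_univ_three] at h0 h1 h2
      refine ⟨x 0, ?_⟩
      funext i
      fin_cases i <;> simp <;> linarith
    · rintro ⟨t, rfl⟩
      funext i
      fin_cases i <;>
        simp [M, Matrix.mulVec, dotProduct, Fin.sum_univ_three] <;> ring
  · simp [interForm]
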